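/- arXiv:1809.07614 — 2 statements merged into one kernel-verified Lean document; each statement's English description precedes it below -/
import Mathlib

section
/- Let d_s, d_t be doors and let P_m and P_n be finite nonempty sets of points in a metric space with static score function s. Let p_a ∈ P_m and p_b ∈ P_n be such that p_b is a nearest neighbour of p_a in P_n (dist(p_a,p_b) ≤ dist(p_a,p) for all p ∈ P_n) and p_a is a nearest neighbour of p_b in P_m (dist(p_b,p_a) ≤ dist(p_b,p) for all p ∈ P_m). Let p_i ∈ P_m with p_a ≺_{d_s} p_i and p_j ∈ P_n with p_b ≺_{d_t} p_j, and suppose dist(p_a,p_b) < dist(p_i,p_j). Then Cost(⟨d_s, p_a, p_b, d_t⟩) < Cost(⟨d_s, p_i, p_b, d_t⟩) and Cost(⟨d_s, p_a, p_b, d_t⟩) < Cost(⟨d_s, p_i, p_j, d_t⟩); in particular, every route covering the two categories via p_i and p_j is dominated by the route ⟨d_s, p_a, p_b, d_t⟩. (Paper's Pruning Rule 1.) -/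
/-- Point dominance: `pa` dominates `pb` with respect to door `d`. -/
def domBy {X : Type*} [MetricSpace X] (s : X → ℝ) (d pa pb : X) : Prop :=
  dist d pa < dist d pb ∧ s pa < s pb

/-- Cost of the route ⟨ds, p, p', dt⟩. -/
def cost {X : Type*} [MetricSpace X] (s : X → ℝ) (ds p p' dt : X) : ℝ :=
  dist ds p + dist p p' + dist p' dt + s p + s p'

/-- Paper's Pruning Rule 1. -/
theorem pruningRule1 {X : Type*} [MetricSpace X] (s : X → ℝ) (ds dt : X)
    (Pm Pn : Finset X) (hPm : Pm.Nonempty) (hPn : Pn.Nonempty)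
    (pa pb pi pj : X)
    (hpa : pa ∈ Pm) (hpb : pb ∈ Pn)
    (hnn_b : ∀ p ∈ Pn, dist pa pb ≤ dist pa p)
    (hnn_a : ∀ p ∈ Pm, dist pb pa ≤ dist pb p)
    (hpi : pi ∈ Pm) (hpj : pj ∈ Pn)
    (hdom1 : domBy s ds pa pi) (hdom2 : domBy s dt pb pj)
    (hdist : dist pa pb < dist pi pj) :
    cost s ds pa pb dt < cost s ds pi pb dt ∧
    cost s ds pa pb dt < cost s ds pi pj dt := by
  obtain ⟨h1, h2⟩ := hdom1
  obtain ⟨h3, h4⟩ := hdom2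
  have h5 := hnn_a pi hpi
  have e1 : dist pb pa = dist pa pb := dist_comm _ _
  have e2 : dist pb pi = dist pi pb := dist_comm _ _
  have e3 : dist pb dt = dist dt pb := dist_comm _ _
  have e4 : dist pj dt = dist dt pj := dist_comm _ _
  unfold cost
  constructor <;> linarith
end

section
/- Let d_s, d_t, p_a, p_b, p_j, p_x be points of a metric space and s a static score function. Set φ = (dist(d_s,p_b) + s(p_b)) − (dist(d_s,p_a) + s(p_a)). If p_b ≺_{d_s} p_j and dist(p_a,p_x) − φ < dist(p_j,p_x), then Cost(⟨d_s, p_a, p_x, d_t⟩) < Cost(⟨d_s, p_j, p_x, d_t⟩); in particular the route via p_j does not dominate the route ⟨d_s, p_a, p_x, d_t⟩. (The paper's claim for multiple objects, following Theorem 2: when points are visited in dominance order, the threshold dist(p_a,p_x) − φ computed with respect to p_b remains valid for every point p_j dominated by p_b.) -/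
/-- Multiple-objects claim following the paper's Theorem 2: the threshold
computed with respect to `pb` remains valid for every point `pj` dominated
by `pb`. -/
theorem multiObjects {X : Type*} [MetricSpace X] (s : X → ℝ)
    (ds dt pa pb pj px : X) (φ : ℝ)
    (hφ : φ = (dist ds pb + s pb) - (dist ds pa + s pa))
    (hdom : domBy s ds pb pj)
    (hthr : dist pa px - φ < dist pj px) :
    cost s ds pa px dt < cost s ds pj px dt := by
  unfold cost
  obtain ⟨h1, h2⟩ := hdom
  linarith
end
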